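/- Let ι : G ↪ C be a dense full subcategory and U : D → C any functor. Then the domain functor dom : Comma(ι, U) → C is such that dom : Comma(1_C, U) → C is the pointwise left Kan extension of dom ∘ j along j, where j : Comma(ι, U) → Comma(1_C, U) is the induced inclusion. Equivalently, for every object (X, p : X → U(Y), Y) of Comma(1_C, U), the object X is the colimit of the domains of all morphisms in Comma(ι, U) mapping into (X, p, Y). -/

import Mathlib

open CategoryTheory Limits

universe v u₁ u₂

variable {C : Type u₁} [Category.{v} C]

/-- The canonical cocone on the diagram of all morphisms from objects of the subcategory
(along `ι`) into `X`, with apex `X`. -/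
@[simps]
def canonicalCocone {G : Type u₁} [Category.{v} G] (ι : G ⥤ C) (X : C) :
    Cocone (CostructuredArrow.proj ι X ⋙ ι) where
  pt := X
  ι := { app := fun g => g.hom, naturality := fun _ _ f => (CostructuredArrow.w f).trans (Category.comp_id _).symm }

/-- `ι` is dense if every object of `C` is the colimit of the canonical diagram of
morphisms from objects of the subcategory into it. -/
def IsDense {G : Type u₁} [Category.{v} G] (ι : G ⥤ C) : Prop :=
  ∀ X : C, Nonempty (IsColimit (canonicalCocone ι X))

/-- The inclusion `Comma ι U ⥤ Comma (𝟭 C) U` induced by `ι : G ⥤ C`. -/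
@[simps]
def commaIncl {G : Type u₁} [Category.{v} G] {D : Type u₂} [Category.{v} D]
    (ι : G ⥤ C) (U : D ⥤ C) : Comma ι U ⥤ Comma (𝟭 C) U where
  obj p := { left := ι.obj p.left, right := p.right, hom := p.hom }
  map φ := { left := ι.map φ.left, right := φ.right, w := by simp [φ.w] }

namespace DenseAux

variable {G : Type u₁} [Category.{v} G] {D : Type u₂} [Category.{v} D]
  (ι : G ⥤ C) (U : D ⥤ C) (x : Comma (𝟭 C) U)

/-- The comparison functor sending a costructured arrow over `x` in `Comma (𝟭 C) U`
to the underlying costructured arrow over `x.left` in `C`. -/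
@[simps]
def Rfun : CostructuredArrow (commaIncl ι U) x ⥤ CostructuredArrow ι x.left where
  obj c := CostructuredArrow.mk (c.hom.left : ι.obj c.left.left ⟶ x.left)
  map {c c'} φ := CostructuredArrow.homMk φ.left.left (by
    have h := congrArg CommaMorphism.left (CostructuredArrow.w φ)
    simp only [Comma.comp_left, commaIncl_map_left] at h
    exact h)
  map_id c := by ext; simp; rfl
  map_comp φ ψ := by ext; simp; rfl

variable {x} (f' : CostructuredArrow ι x.left)

/-- The underlying comma object of the base point. -/
@[simps]
def c0L : Comma ι U := { left := f'.left, right := x.right, hom := f'.hom ≫ x.hom }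

/-- The base object in the costructured arrow category. -/
def c0 : CostructuredArrow (commaIncl ι U) x :=
  CostructuredArrow.mk (Y := c0L ι U f')
    ({ left := f'.hom, right := 𝟙 x.right, w := by erw [U.map_id, Category.comp_id]; rfl } :
      (commaIncl ι U).obj (c0L ι U f') ⟶ x)

/-- The base point of `StructuredArrow f' (Rfun ι U x)`. -/
def obj0 : StructuredArrow f' (Rfun ι U x) :=
  StructuredArrow.mk (Y := c0 ι U f')
    (CostructuredArrow.homMk (𝟙 f'.left) (by simp [c0, Rfun]; erw [ι.map_id, Category.id_comp]; rfl))

variable {ι U f'}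

lemma a_w (j : StructuredArrow f' (Rfun ι U x)) :
    ι.map j.hom.left ≫ j.right.hom.left = f'.hom := by
  have h := CostructuredArrow.w j.hom
  exact h

lemma hom_w (j : StructuredArrow f' (Rfun ι U x)) :
    j.right.hom.left ≫ x.hom = j.right.left.hom ≫ U.map j.right.hom.right := by
  have h2 := j.right.hom.w
  exact h2

lemma key_w (j : StructuredArrow f' (Rfun ι U x)) :
    f'.hom ≫ x.hom = (ι.map j.hom.left ≫ j.right.left.hom) ≫ U.map j.right.hom.right := by
  rw [← a_w j]
  erw [Category.assoc, Category.assoc]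
  erw [hom_w j]; rfl

/-- The underlying comma object of the intermediate object for `j`. -/
@[simps]
def cmidL (j : StructuredArrow f' (Rfun ι U x)) : Comma ι U :=
  { left := f'.left, right := j.right.left.right,
    hom := ι.map j.hom.left ≫ j.right.left.hom }

/-- The intermediate object in the costructured arrow category. -/
def cmid (j : StructuredArrow f' (Rfun ι U x)) : CostructuredArrow (commaIncl ι U) x :=
  CostructuredArrow.mk (Y := cmidL j)
    ({ left := f'.hom, right := j.right.hom.right,
       w := by exact key_w j } :
      (commaIncl ι U).obj (cmidL j) ⟶ x)

/-- The intermediate object of `StructuredArrow f' (Rfun ι U x)` for `j`. -/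
def objmid (j : StructuredArrow f' (Rfun ι U x)) : StructuredArrow f' (Rfun ι U x) :=
  StructuredArrow.mk (Y := cmid j)
    (CostructuredArrow.homMk (𝟙 f'.left) (by simp [cmid, Rfun]; erw [ι.map_id, Category.id_comp]; rfl))

/-- The morphism from the intermediate object to `j`. -/
def toJ (j : StructuredArrow f' (Rfun ι U x)) : objmid j ⟶ j :=
  StructuredArrow.homMk
    (CostructuredArrow.homMk
      ({ left := j.hom.left, right := 𝟙 j.right.left.right,
         w := by simp [cmid]; erw [U.map_id, Category.comp_id]; rfl } : (cmid j).left ⟶ j.right.left)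
      (by
        ext
        · simp [cmid, objmid]; exact a_w j
        · simp [cmid, objmid]; erw [Category.id_comp]))
    (by
      ext
      simp [objmid, Rfun]; exact Category.id_comp _)

/-- The morphism from the intermediate object to the base point. -/
def toBase (j : StructuredArrow f' (Rfun ι U x)) : objmid j ⟶ obj0 ι U f' :=
  StructuredArrow.homMk
    (CostructuredArrow.homMk
      ({ left := 𝟙 f'.left, right := j.right.hom.right,
         w := by simp [cmid, c0]; erw [ι.map_id, Category.id_comp]; exact key_w j } : (cmid j).left ⟶ (c0 ι U f').left)
      (by
        ext
        · simp [cmid, c0, c0L, obj0, objmid]; erw [ι.map_id, Category.id_comp]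
        · simp [cmid, c0, c0L, obj0, objmid]; erw [Category.comp_id]))
    (by
      ext
      simp [objmid, obj0, Rfun]; exact Category.comp_id _)

instance : IsConnected (StructuredArrow f' (Rfun ι U x)) := by
  have hne : Nonempty (StructuredArrow f' (Rfun ι U x)) := ⟨obj0 ι U f'⟩
  apply zigzag_isConnected
  intro j₁ j₂
  have h : ∀ j : StructuredArrow f' (Rfun ι U x), Zigzag j (obj0 ι U f') := fun j =>
    Relation.ReflTransGen.head (Or.inr ⟨toJ j⟩)
      (Relation.ReflTransGen.single (Or.inl ⟨toBase j⟩))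
  exact (h j₁).trans (Zigzag.symm (h j₂))

instance final_Rfun : (Rfun ι U x).Final := ⟨fun _ => inferInstance⟩

end DenseAux

/-- If `ι : G ⥤ C` is a dense full subcategory inclusion and `U : D ⥤ C` is any functor,
then the domain functor `dom : Comma (𝟭 C) U ⥤ C` is the pointwise left Kan extension of
`dom ∘ j` along the induced inclusion `j : Comma ι U ⥤ Comma (𝟭 C) U` (with identity
unit). -/
theorem dom_pointwiseLeftKanExtension_along_commaIncl
    {G : Type u₁} [Category.{v} G] {D : Type u₂} [Category.{v} D]
    (ι : G ⥤ C) [ι.Full] [ι.Faithful] (hdense : IsDense ι) (U : D ⥤ C) :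
    Nonempty ((Functor.LeftExtension.mk (Comma.fst (𝟭 C) U)
      (𝟙 (commaIncl ι U ⋙ Comma.fst (𝟭 C) U))).IsPointwiseLeftKanExtension) := by
  refine ⟨fun x => ?_⟩
  have hc := (hdense x.left).some
  have h2 := (Functor.Final.isColimitWhiskerEquiv (DenseAux.Rfun ι U x)
    (canonicalCocone ι x.left)).symm hc
  exact IsColimit.ofIsoColimit h2 (Cocones.ext (Iso.refl _) (by intro j; simp; exact (Category.comp_id _).trans (Category.id_comp _).symm))
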